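/- Let Y be a Hadamard manifold with sectional curvature ≤ −1 and let A, B be disjoint closed convex subsets. If x_i ∈ A is a sequence with dist(x_i, B) → D := dist(A, B) > 0, then the sequence x_i is Cauchy; consequently the pair of nearest points realizing dist(A,B) exists and is unique. -/

import Mathlib

noncomputable section
open Metric Set

/-- `γ` restricted to `[a,b]` is a unit-speed (minimizing) geodesic segment. -/
def IsGeodesicOn {X : Type*} [MetricSpace X] (γ : ℝ → X) (a b : ℝ) : Prop :=
  a ≤ b ∧ ∀ s ∈ Set.Icc a b, ∀ t ∈ Set.Icc a b, dist (γ s) (γ t) = |s - t|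

/-- Every pair of points is joined by a geodesic segment. -/
def IsGeodesicSpace (X : Type*) [MetricSpace X] : Prop :=
  ∀ x y : X, ∃ γ : ℝ → X, IsGeodesicOn γ 0 (dist x y) ∧ γ 0 = x ∧ γ (dist x y) = y

/-- Comparison condition defining CAT spaces with model space `M`:
for any geodesic triangle and a comparison triangle in `M`, distances between
points on two sides issuing from a common vertex are bounded by the
corresponding distances in the comparison triangle. -/
def CATWith (M : Type*) [MetricSpace M] (X : Type*) [MetricSpace X] : Prop :=
  IsGeodesicSpace X ∧
  ∀ (p q r : X) (γ δ : ℝ → X),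
    IsGeodesicOn γ 0 (dist p q) → γ 0 = p → γ (dist p q) = q →
    IsGeodesicOn δ 0 (dist p r) → δ 0 = p → δ (dist p r) = r →
    ∀ (p' q' r' : M) (γ' δ' : ℝ → M),
      dist p' q' = dist p q → dist p' r' = dist p r → dist q' r' = dist q r →
      IsGeodesicOn γ' 0 (dist p q) → γ' 0 = p' → γ' (dist p q) = q' →
      IsGeodesicOn δ' 0 (dist p r) → δ' 0 = p' → δ' (dist p r) = r' →
      ∀ s ∈ Set.Icc (0:ℝ) (dist p q), ∀ t ∈ Set.Icc (0:ℝ) (dist p r),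
        dist (γ s) (δ t) ≤ dist (γ' s) (δ' t)

/-- A CAT(-1) space: comparison with the hyperbolic plane of curvature `-1`. -/
def CATMinusOne (X : Type*) [MetricSpace X] : Prop := CATWith UpperHalfPlane X

/-- A CAT(0) space: comparison with the Euclidean plane. -/
def CATZero (X : Type*) [MetricSpace X] : Prop := CATWith (EuclideanSpace ℝ (Fin 2)) X

/-- A subset is (geodesically) convex if it contains every geodesic segment
between any two of its points. -/
def GConvex {X : Type*} [MetricSpace X] (A : Set X) : Prop :=
  ∀ (γ : ℝ → X) (a b : ℝ), IsGeodesicOn γ a b → γ a ∈ A → γ b ∈ A →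
    ∀ t ∈ Set.Icc a b, γ t ∈ A

/-- Distance between two subsets: the infimum of distances between their points. -/
def setDist {X : Type*} [MetricSpace X] (A B : Set X) : ℝ :=
  sInf ((fun p : X × X => dist p.1 p.2) '' A ×ˢ B)

end

noncomputable section
namespace S18
open Real Set

/-! ### Pure real helper lemmas -/

lemma cosh_halfc (w : ℝ) : Real.cosh w = 2*(Real.cosh (w/2))^2 - 1 := by
  have := Real.cosh_two_mul (w/2)
  rw [show 2*(w/2) = w by ring] at this
  rw [this, Real.cosh_sq]; ring

lemma cosh_halfs (w : ℝ) : Real.cosh w = 2*(Real.sinh (w/2))^2 + 1 := by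
  have := Real.cosh_two_mul (w/2)
  rw [show 2*(w/2) = w by ring] at this
  rw [this, Real.cosh_sq]; ring

lemma sinh_halfd (w : ℝ) : Real.sinh w = 2*Real.sinh (w/2)*Real.cosh (w/2) := by
  have := Real.sinh_two_mul (w/2)
  rw [show 2*(w/2) = w by ring] at this
  rw [this]

lemma sinh_eq_sqrt {x : ℝ} (h : 0 ≤ x) : Real.sinh x = Real.sqrt ((Real.cosh x)^2 - 1) := by
  rw [show (Real.cosh x)^2 - 1 = (Real.sinh x)^2 by rw [Real.cosh_sq]; ring]
  rw [Real.sqrt_sq (Real.sinh_nonneg_iff.mpr h)]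

lemma cosh_mono {a b : ℝ} (ha : 0 ≤ a) (h : a ≤ b) : Real.cosh a ≤ Real.cosh b := by
  rw [← Real.cosh_abs a, ← Real.cosh_abs b]
  exact Real.cosh_le_cosh.mpr
    (by rw [abs_abs, abs_of_nonneg (abs_nonneg _), abs_of_nonneg ha, abs_of_nonneg (ha.trans h)]
        exact h)

lemma cosh_smono {a b : ℝ} (ha : 0 ≤ a) (h : a < b) : Real.cosh a < Real.cosh b := by
  rw [← Real.cosh_abs a, ← Real.cosh_abs b]
  exact Real.cosh_lt_cosh.mpr
    (by rw [abs_abs, abs_of_nonneg (abs_nonneg _), abs_of_nonneg ha, abs_of_nonneg (ha.trans h.le)]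
        exact h)

lemma sqrt_amgm {a b : ℝ} (ha : 0 ≤ a) (hb : 0 ≤ b) : Real.sqrt a * Real.sqrt b ≤ (a+b)/2 := by
  nlinarith [sq_nonneg (Real.sqrt a - Real.sqrt b), Real.sq_sqrt ha, Real.sq_sqrt hb,
    Real.sqrt_nonneg a, Real.sqrt_nonneg b]

lemma Pid (a p b q X : ℝ) (ha : a^2 = p^2+1) (hb : b^2 = q^2+1) :
    2*(a*b - p*q*X)^2 - 1 = (2*a^2-1)*(2*b^2-1) - 4*a*b*p*q*X - 2*p^2*q^2*(1-X^2) := by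
  linear_combination ((-2)*q^2 - 2*(b^2 - q^2 - 1)) * ha + ((-2)*p^2) * hb

/-! ### The model space: explicit geodesics and triangles in the upper half-plane -/

def vpt (s : ℝ) : UpperHalfPlane := UpperHalfPlane.mk ⟨0, Real.exp s⟩ (by simpa using Real.exp_pos s)

@[simp] lemma vpt_re (s : ℝ) : (vpt s).re = 0 := rfl
@[simp] lemma vpt_im (s : ℝ) : (vpt s).im = Real.exp s := rfl

lemma cosh_dist_vpt (s t : ℝ) :
    Real.cosh (dist (vpt s) (vpt t)) = Real.cosh (s - t) := by
  rw [UpperHalfPlane.cosh_dist', vpt_re, vpt_im, vpt_re, vpt_im]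
  rw [Real.cosh_eq, neg_sub, Real.exp_sub, Real.exp_sub]
  have hs := Real.exp_pos s
  have ht := Real.exp_pos t
  field_simp
  ring

lemma dist_eq_of_cosh {d r : ℝ} (hd : 0 ≤ d) (hr : 0 ≤ r)
    (h : Real.cosh d = Real.cosh r) : d = r :=
  Real.cosh_strictMonoOn.injOn hd hr h

lemma dist_vpt (s t : ℝ) : dist (vpt s) (vpt t) = |s - t| := by
  apply dist_eq_of_cosh dist_nonneg (abs_nonneg _)
  rw [cosh_dist_vpt, Real.cosh_abs]

def Qm (μ t : ℝ) : ℝ := μ * (Real.exp t ^ 2 - 1) + 1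

lemma Qm_pos {μ : ℝ} (hμ0 : 0 ≤ μ) (hμ1 : μ ≤ 1) (t : ℝ) : 0 < Qm μ t := by
  have ht := Real.exp_pos t
  have h2 : 0 < Real.exp t ^ 2 := by positivity
  rcases le_total μ (1/2) with h | h
  · have : μ * (Real.exp t ^ 2 - 1) ≥ - (1/2) := by nlinarith
    unfold Qm; nlinarith
  · unfold Qm; nlinarith

def wpt (μ : ℝ) (hμ0 : 0 ≤ μ) (hμ1 : μ ≤ 1) (t : ℝ) : UpperHalfPlane :=
  UpperHalfPlane.mk ⟨Real.sqrt (μ*(1-μ)) * (Real.exp t ^ 2 - 1) / Qm μ t, Real.exp t / Qm μ t⟩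
    (by exact div_pos (Real.exp_pos t) (Qm_pos hμ0 hμ1 t))

@[simp] lemma wpt_re (μ : ℝ) (hμ0 : 0 ≤ μ) (hμ1 : μ ≤ 1) (t : ℝ) :
    (wpt μ hμ0 hμ1 t).re = Real.sqrt (μ*(1-μ)) * (Real.exp t ^ 2 - 1) / Qm μ t := rfl
@[simp] lemma wpt_im (μ : ℝ) (hμ0 : 0 ≤ μ) (hμ1 : μ ≤ 1) (t : ℝ) :
    (wpt μ hμ0 hμ1 t).im = Real.exp t / Qm μ t := rfl

lemma cosh_dist_vpt_wpt (μ : ℝ) (hμ0 : 0 ≤ μ) (hμ1 : μ ≤ 1) (s t : ℝ) :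
    Real.cosh (dist (vpt s) (wpt μ hμ0 hμ1 t)) =
      Real.cosh s * Real.cosh t - Real.sinh s * Real.sinh t * (1 - 2*μ) := by
  have hnn : 0 ≤ μ * (1 - μ) := by nlinarith
  have hQ := Qm_pos hμ0 hμ1 t
  have hS := Real.exp_pos s; have hT := Real.exp_pos t
  rw [UpperHalfPlane.cosh_dist', wpt_re, wpt_im, vpt_re, vpt_im]
  have e1 : (0 - Real.sqrt (μ*(1-μ)) * (Real.exp t ^ 2 - 1) / Qm μ t) ^ 2
      = (μ*(1-μ)) * (Real.exp t ^ 2 - 1)^2 / (Qm μ t)^2 := by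
    rw [zero_sub, neg_sq, div_pow, mul_pow, Real.sq_sqrt hnn]
  rw [e1, Real.cosh_eq, Real.cosh_eq, Real.sinh_eq, Real.sinh_eq, Real.exp_neg, Real.exp_neg]
  have hQdef : Qm μ t = μ * (Real.exp t ^ 2 - 1) + 1 := rfl
  rw [hQdef]
  have h1 : 0 < μ * (Real.exp t ^ 2 - 1) + 1 := by rw [← hQdef]; exact hQ
  field_simp
  ring

lemma cosh_dist_wpt_wpt (μ : ℝ) (hμ0 : 0 ≤ μ) (hμ1 : μ ≤ 1) (s t : ℝ) :
    Real.cosh (dist (wpt μ hμ0 hμ1 s) (wpt μ hμ0 hμ1 t)) = Real.cosh (s - t) := by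
  have hnn : 0 ≤ μ * (1 - μ) := by nlinarith
  have hQs := Qm_pos hμ0 hμ1 s
  have hQt := Qm_pos hμ0 hμ1 t
  have hS := Real.exp_pos s; have hT := Real.exp_pos t
  rw [UpperHalfPlane.cosh_dist', wpt_re, wpt_im, wpt_re, wpt_im]
  have e1 : (Real.sqrt (μ*(1-μ)) * (Real.exp s ^ 2 - 1) / Qm μ s
        - Real.sqrt (μ*(1-μ)) * (Real.exp t ^ 2 - 1) / Qm μ t) ^ 2
      = (μ*(1-μ)) * ((Real.exp s ^ 2 - 1) / Qm μ s - (Real.exp t ^ 2 - 1) / Qm μ t)^2 := by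
    rw [show Real.sqrt (μ*(1-μ)) * (Real.exp s ^ 2 - 1) / Qm μ s
        - Real.sqrt (μ*(1-μ)) * (Real.exp t ^ 2 - 1) / Qm μ t
        = Real.sqrt (μ*(1-μ)) * ((Real.exp s ^ 2 - 1) / Qm μ s - (Real.exp t ^ 2 - 1) / Qm μ t) by
          ring,
      mul_pow, Real.sq_sqrt hnn]
  rw [e1, Real.cosh_eq, neg_sub, Real.exp_sub, Real.exp_sub]
  have hQsdef : Qm μ s = μ * (Real.exp s ^ 2 - 1) + 1 := rfl
  have hQtdef : Qm μ t = μ * (Real.exp t ^ 2 - 1) + 1 := rfl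
  rw [hQsdef, hQtdef]
  have h1 : 0 < μ * (Real.exp s ^ 2 - 1) + 1 := by rw [← hQsdef]; exact hQs
  have h2 : 0 < μ * (Real.exp t ^ 2 - 1) + 1 := by rw [← hQtdef]; exact hQt
  field_simp
  ring

lemma dist_wpt (μ : ℝ) (hμ0 : 0 ≤ μ) (hμ1 : μ ≤ 1) (s t : ℝ) :
    dist (wpt μ hμ0 hμ1 s) (wpt μ hμ0 hμ1 t) = |s - t| := by
  apply dist_eq_of_cosh dist_nonneg (abs_nonneg _)
  rw [cosh_dist_wpt_wpt, Real.cosh_abs]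

lemma wpt_zero (μ : ℝ) (hμ0 : 0 ≤ μ) (hμ1 : μ ≤ 1) : wpt μ hμ0 hμ1 0 = vpt 0 := by
  apply UpperHalfPlane.ext'
  · rw [wpt_re, vpt_re]; simp [Qm]
  · rw [wpt_im, vpt_im]; simp [Qm]

/-! ### The master comparison lemma -/

lemma master {Y : Type*} [MetricSpace Y] (hY : CATMinusOne Y) (p q r : Y)
    (γ δ : ℝ → Y)
    (hγ : IsGeodesicOn γ 0 (dist p q)) (hγ0 : γ 0 = p) (hγ1 : γ (dist p q) = q)
    (hδ : IsGeodesicOn δ 0 (dist p r)) (hδ0 : δ 0 = p) (hδ1 : δ (dist p r) = r)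
    (ha : 0 < dist p q) (hb : 0 < dist p r) :
    ∀ s ∈ Set.Icc (0:ℝ) (dist p q), ∀ t ∈ Set.Icc (0:ℝ) (dist p r),
      Real.cosh (dist (γ s) (δ t)) ≤ Real.cosh s * Real.cosh t - Real.sinh s * Real.sinh t *
        ((Real.cosh (dist p q) * Real.cosh (dist p r) - Real.cosh (dist q r)) /
          (Real.sinh (dist p q) * Real.sinh (dist p r))) := by
  set a := dist p q with hadef
  set b := dist p r with hbdef
  set c := dist q r with hcdef
  have hc0 : 0 ≤ c := dist_nonneg
  have htri1 : c ≤ a + b := by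
    rw [hadef, hbdef, hcdef, dist_comm p q]; exact dist_triangle q p r
  have htri2 : |a - b| ≤ c := by
    rw [abs_le]
    constructor
    · have := dist_triangle p q r
      simp only [← hadef, ← hbdef, ← hcdef] at this; linarith
    · have := dist_triangle p r q
      rw [dist_comm r q] at this
      simp only [← hadef, ← hbdef, ← hcdef] at this; linarith
  have hsa : 0 < Real.sinh a := Real.sinh_pos_iff.mpr ha
  have hsb : 0 < Real.sinh b := Real.sinh_pos_iff.mpr hb
  have hsab : 0 < Real.sinh a * Real.sinh b := mul_pos hsa hsb
  set X : ℝ := (Real.cosh a * Real.cosh b - Real.cosh c) / (Real.sinh a * Real.sinh b) with hX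
  have hX1 : X ≤ 1 := by
    rw [hX, div_le_one hsab]
    have h1 : Real.cosh (a - b) ≤ Real.cosh c := by
      rw [← Real.cosh_abs (a-b), ← Real.cosh_abs c]
      exact Real.cosh_le_cosh.mpr
        (by rw [abs_abs, abs_of_nonneg (abs_nonneg _)]; rwa [abs_of_nonneg hc0])
    rw [Real.cosh_sub] at h1; linarith
  have hXm1 : -1 ≤ X := by
    rw [hX, le_div_iff₀ hsab]
    have h1 : Real.cosh c ≤ Real.cosh (a + b) := by
      rw [← Real.cosh_abs c, ← Real.cosh_abs (a+b)]
      exact Real.cosh_le_cosh.mpr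
        (by rw [abs_abs, abs_of_nonneg (abs_nonneg _), abs_of_nonneg hc0,
              abs_of_nonneg (by positivity : (0:ℝ) ≤ a + b)]
            exact htri1)
    rw [Real.cosh_add] at h1; linarith
  set μ : ℝ := (1 - X)/2 with hμ
  have hμ0 : 0 ≤ μ := by rw [hμ]; linarith
  have hμ1 : μ ≤ 1 := by rw [hμ]; linarith
  have hXμ : 1 - 2*μ = X := by rw [hμ]; ring
  have hdpq : dist (vpt 0) (vpt a) = a := by
    rw [dist_vpt]; rw [abs_of_nonpos (by linarith)]; ring
  have hdpr : dist (vpt 0) (wpt μ hμ0 hμ1 b) = b := by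
    apply dist_eq_of_cosh dist_nonneg hb.le
    rw [cosh_dist_vpt_wpt, Real.cosh_zero, Real.sinh_zero]; ring
  have hdqr : dist (vpt a) (wpt μ hμ0 hμ1 b) = c := by
    apply dist_eq_of_cosh dist_nonneg hc0
    rw [cosh_dist_vpt_wpt, hXμ, hX]
    field_simp; ring
  have hγ' : IsGeodesicOn vpt 0 a := ⟨ha.le, fun s _ t _ => dist_vpt s t⟩
  have hδ' : IsGeodesicOn (wpt μ hμ0 hμ1) 0 b := ⟨hb.le, fun s _ t _ => dist_wpt μ hμ0 hμ1 s t⟩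
  intro s hs t ht
  have hcomp := hY.2 p q r γ δ hγ hγ0 hγ1 hδ hδ0 hδ1 (vpt 0) (vpt a) (wpt μ hμ0 hμ1 b)
    vpt (wpt μ hμ0 hμ1) hdpq hdpr hdqr hγ' rfl rfl hδ' (wpt_zero μ hμ0 hμ1) rfl s hs t ht
  calc Real.cosh (dist (γ s) (δ t)) ≤ Real.cosh (dist (vpt s) (wpt μ hμ0 hμ1 t)) := by
        rw [← Real.cosh_abs (dist (γ s) (δ t)), ← Real.cosh_abs (dist (vpt s) (wpt μ hμ0 hμ1 t))]
        exact Real.cosh_le_cosh.mpr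
          (by rw [abs_abs, abs_of_nonneg (abs_nonneg _), abs_of_nonneg dist_nonneg,
                abs_of_nonneg dist_nonneg]
              exact hcomp)
    _ = Real.cosh s * Real.cosh t - Real.sinh s * Real.sinh t * X := by
        rw [cosh_dist_vpt_wpt, hXμ]

lemma master' {Y : Type*} [MetricSpace Y] (hY : CATMinusOne Y) {p q r : Y}
    {γ δ : ℝ → Y} {a b c : ℝ}
    (hda : dist p q = a) (hdb : dist p r = b) (hdc : dist q r = c)
    (hγ : IsGeodesicOn γ 0 a) (hγ0 : γ 0 = p) (hγ1 : γ a = q)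
    (hδ : IsGeodesicOn δ 0 b) (hδ0 : δ 0 = p) (hδ1 : δ b = r)
    (ha : 0 < a) (hb : 0 < b) :
    ∀ s ∈ Set.Icc (0:ℝ) a, ∀ t ∈ Set.Icc (0:ℝ) b,
      Real.cosh (dist (γ s) (δ t)) ≤ Real.cosh s * Real.cosh t - Real.sinh s * Real.sinh t *
        ((Real.cosh a * Real.cosh b - Real.cosh c) / (Real.sinh a * Real.sinh b)) := by
  subst hda; subst hdb; subst hdc
  exact master hY p q r γ δ hγ hγ0 hγ1 hδ hδ0 hδ1 ha hb

/-! ### geodesic utilities -/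

variable {Y : Type*} [MetricSpace Y]

lemma geo_restrict {γ : ℝ → Y} {L L' : ℝ} (hγ : IsGeodesicOn γ 0 L) (h0 : 0 ≤ L') (h1 : L' ≤ L) :
    IsGeodesicOn γ 0 L' :=
  ⟨h0, fun s hs t ht => hγ.2 s ⟨hs.1, hs.2.trans h1⟩ t ⟨ht.1, ht.2.trans h1⟩⟩

lemma geo_reverse {γ : ℝ → Y} {L : ℝ} (hγ : IsGeodesicOn γ 0 L) :
    IsGeodesicOn (fun t => γ (L - t)) 0 L := by
  refine ⟨hγ.1, fun s hs t ht => ?_⟩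
  rw [hγ.2 (L-s) ⟨by linarith [hs.2], by linarith [hs.1]⟩ (L-t)
    ⟨by linarith [ht.2], by linarith [ht.1]⟩,
    show L-s-(L-t) = t - s by ring, abs_sub_comm]

lemma geo_dist {γ : ℝ → Y} {L : ℝ} (hγ : IsGeodesicOn γ 0 L) {s t : ℝ}
    (hs : s ∈ Set.Icc 0 L) (ht : t ∈ Set.Icc 0 L) (hst : s ≤ t) : dist (γ s) (γ t) = t - s := by
  rw [hγ.2 s hs t ht, abs_of_nonpos (by linarith), neg_sub]


/-! ### The key quantitative rigidity lemma -/

set_option maxHeartbeats 1600000 in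
lemma core (hY : CATMinusOne Y) (A B : Set Y) (hAc : GConvex A) (hBc : GConvex B)
    (hBne : B.Nonempty) (D : ℝ) (hDpos : 0 < D)
    (hsep : ∀ a ∈ A, ∀ b ∈ B, D ≤ dist a b) (η : ℝ) (hη : 0 < η) :
    ∃ ε : ℝ, 0 < ε ∧ ∀ x ∈ A, ∀ y ∈ A,
      Metric.infDist x B ≤ D + ε → Metric.infDist y B ≤ D + ε → dist x y ≤ η := by
  have hC : 1 < Real.cosh D := by
    have := cosh_smono (le_refl (0:ℝ)) hDpos
    rwa [Real.cosh_zero] at this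
  set C := Real.cosh D with hCdef
  have hsD2 : 0 < (Real.sinh (D/2))^2 := pow_pos (Real.sinh_pos_iff.mpr (by linarith)) 2
  set sD2 := (Real.sinh (D/2))^2 with hsD2def
  have hsη2 : 0 < (Real.sinh (η/2))^2 := pow_pos (Real.sinh_pos_iff.mpr (by linarith)) 2
  set sη2 := (Real.sinh (η/2))^2 with hsη2def
  set κ := Real.sqrt (8*(1+1/sD2)) with hκdef
  have hκsq : κ^2 = 8*(1+1/sD2) := Real.sq_sqrt (by positivity)
  have hκpos : 0 < κ := Real.sqrt_pos.mpr (by positivity)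
  have h1η : 1 < Real.cosh η := by
    have := cosh_smono (le_refl (0:ℝ)) hη; rwa [Real.cosh_zero] at this
  have h1η2 : 1 < Real.cosh (η/2) := by
    have := cosh_smono (le_refl (0:ℝ)) (by linarith : (0:ℝ) < η/2)
    rwa [Real.cosh_zero] at this
  have hm1p : 0 < C*(Real.cosh η - 1)/2 := by nlinarith only [hC, h1η]
  have hm2p : 0 < (2*C*Real.cosh (η/2) - 2*C)/(3*C+5) := by
    apply div_pos
    · nlinarith only [hC, h1η2]
    · nlinarith only [hC]
  have hm3p : 0 < (C-1)/32 := by nlinarith only [hC]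
  have hm4p : 0 < sη2*(C-1)/32 := by nlinarith only [hC, hsη2]
  have hm5p : 0 < (min 1 ((C-1)/8))/(16*(1+1/sD2)) := by
    apply div_pos
    · apply lt_min
      · norm_num
      · nlinarith only [hC]
    · positivity
  have hm6p : 0 < η/(8*(κ+1)) := by positivity
  obtain ⟨q, hq0, hq1, hqm1, hqm2, hqm3, hqm4, hqm5, hqm6⟩ :
      ∃ q : ℝ, 0 < q ∧ q ≤ 1 ∧ q ≤ C*(Real.cosh η - 1)/2 ∧
        q ≤ (2*C*Real.cosh (η/2) - 2*C)/(3*C+5) ∧ q ≤ (C-1)/32 ∧ q ≤ sη2*(C-1)/32 ∧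
        q ≤ (min 1 ((C-1)/8))/(16*(1+1/sD2)) ∧ q ≤ η/(8*(κ+1)) := by
    refine ⟨min 1 (min (C*(Real.cosh η - 1)/2) (min ((2*C*Real.cosh (η/2) - 2*C)/(3*C+5))
      (min ((C-1)/32) (min (sη2*(C-1)/32) (min ((min 1 ((C-1)/8))/(16*(1+1/sD2)))
        (η/(8*(κ+1)))))))), ?_, ?_, ?_, ?_, ?_, ?_, ?_, ?_⟩
    · exact lt_min one_pos (lt_min hm1p (lt_min hm2p (lt_min hm3p (lt_min hm4p
        (lt_min hm5p hm6p)))))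
    · exact min_le_left _ _
    · exact (min_le_right _ _).trans (min_le_left _ _)
    · exact (min_le_right _ _).trans ((min_le_right _ _).trans (min_le_left _ _))
    · exact (min_le_right _ _).trans ((min_le_right _ _).trans ((min_le_right _ _).trans
        (min_le_left _ _)))
    · exact (min_le_right _ _).trans ((min_le_right _ _).trans ((min_le_right _ _).trans
        ((min_le_right _ _).trans (min_le_left _ _))))
    · exact (min_le_right _ _).trans ((min_le_right _ _).trans ((min_le_right _ _).trans
        ((min_le_right _ _).trans ((min_le_right _ _).trans (min_le_left _ _)))))
    · exact (min_le_right _ _).trans ((min_le_right _ _).trans ((min_le_right _ _).trans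
        ((min_le_right _ _).trans ((min_le_right _ _).trans (min_le_right _ _)))))
  have hq2q : q^2 ≤ q := by nlinarith only [hq0, hq1]
  have hq4q2 : q^4 ≤ q^2 := by nlinarith only [hq0, hq1, hq2q, sq_nonneg q]
  have hq4q : q^4 ≤ q := le_trans hq4q2 hq2q
  have hq40 : 0 < q^4 := pow_pos hq0 4
  -- choose ε by continuity
  have hcont : ContinuousAt (fun z : ℝ => Real.cosh (D + 2*z)) 0 :=
    (Real.continuous_cosh.comp
      (continuous_const.add (continuous_const.mul continuous_id))).continuousAt
  rw [Metric.continuousAt_iff] at hcont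
  obtain ⟨dδ, hdδ0, hdδ⟩ := hcont (q^4) hq40
  set ε := min (dδ/2) (η/8) with hεdef
  have hε0 : 0 < ε := lt_min (half_pos hdδ0) (by positivity)
  have hεη : ε ≤ η/8 := min_le_right _ _
  have hΔ : Real.cosh (D + 2*ε) ≤ C + q^4 := by
    have h1 : dist ε 0 < dδ := by
      rw [Real.dist_eq, sub_zero, abs_of_pos hε0]
      calc ε ≤ dδ/2 := min_le_left _ _
        _ < dδ := by linarith only [hdδ0]
    have h2 := hdδ h1
    rw [Real.dist_eq] at h2
    have h3 : Real.cosh (D + 2*0) = C := by norm_num [hCdef]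
    rw [h3] at h2
    have h4 := abs_lt.mp h2
    linarith only [h4.1, h4.2]
  refine ⟨ε, hε0, ?_⟩
  intro x hxA y hyA hix hiy
  by_contra hcon
  push_neg at hcon
  obtain ⟨bx, hbxB, hbxd⟩ := (Metric.infDist_lt_iff hBne).mp
    (lt_of_le_of_lt hix (by linarith only [hε0] : D + ε < D + 2*ε))
  obtain ⟨bb, hbbB, hbbd⟩ := (Metric.infDist_lt_iff hBne).mp
    (lt_of_le_of_lt hiy (by linarith only [hε0] : D + ε < D + 2*ε))
  have hc1D : D ≤ dist x bx := hsep x hxA bx hbxB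
  have hc2D : D ≤ dist y bb := hsep y hyA bb hbbB
  have heD : D ≤ dist x bb := hsep x hxA bb hbbB
  have habs1 : |dist x bb - dist x y| ≤ dist y bb := by
    rw [dist_comm x bb, dist_comm x y, dist_comm y bb]
    exact abs_dist_sub_le bb y x
  have habs2 : |dist x bb - dist bb bx| ≤ dist x bx := by
    rw [dist_comm bb bx]
    exact abs_dist_sub_le x bx bb
  have htrie : dist x bb ≤ dist x bx + dist bb bx := by
    rw [dist_comm bb bx]; exact dist_triangle x bx bb
  have he'd : dist bb x = dist x bb := dist_comm bb x
  obtain ⟨γ, hγ, hγ0, hγ1⟩ := hY.1 x y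
  obtain ⟨δ, hδ, hδ0, hδ1⟩ := hY.1 x bb
  obtain ⟨β, hβ, hβ0, hβ1⟩ := hY.1 bb bx
  set u := dist x y with hu_def
  set e := dist x bb with he_def
  set v := dist bb bx with hv_def
  set c1 := dist x bx with hc1_def
  set c2 := dist y bb with hc2_def
  have hu0 : 0 < u := lt_trans hη hcon
  have he0 : 0 < e := lt_of_lt_of_le hDpos heD
  have hcu2 : Real.cosh (η/2) < Real.cosh (u/2) :=
    cosh_smono (by linarith only [hη]) (by linarith only [hcon])
  have hcoshc1 : Real.cosh c1 ≤ C + q^4 :=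
    le_trans (cosh_mono (hDpos.le.trans hc1D) (le_of_lt hbxd)) hΔ
  have hcoshc2 : Real.cosh c2 ≤ C + q^4 :=
    le_trans (cosh_mono (hDpos.le.trans hc2D) (le_of_lt hbbd)) hΔ
  have hCcoshe : C ≤ Real.cosh e := cosh_mono hDpos.le heD
  -- triangle T1 = (x; y, bb)
  have M1 := master' hY hu_def.symm he_def.symm hc2_def.symm hγ hγ0 hγ1 hδ hδ0 hδ1 hu0 he0
  set X1 := (Real.cosh u * Real.cosh e - Real.cosh c2) / (Real.sinh u * Real.sinh e) with hX1_def
  have hsu : 0 < Real.sinh u := Real.sinh_pos_iff.mpr hu0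
  have hse : 0 < Real.sinh e := Real.sinh_pos_iff.mpr he0
  have hc2eq : Real.cosh c2 = Real.cosh u * Real.cosh e - Real.sinh u * Real.sinh e * X1 := by
    rw [hX1_def]; field_simp; ring
  clear_value X1
  have hX1le : X1 ≤ 1 := by
    have h1 : Real.cosh (e - u) ≤ Real.cosh c2 := by
      rw [← Real.cosh_abs (e-u), ← Real.cosh_abs c2]
      apply Real.cosh_le_cosh.mpr
      rw [abs_abs, abs_of_nonneg (abs_nonneg _), abs_of_nonneg (hDpos.le.trans hc2D)]
      exact habs1
    rw [Real.cosh_sub] at h1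
    nlinarith only [hc2eq, mul_pos hsu hse, h1]
  have hX1pos : 0 < X1 := by
    by_contra hneg
    push_neg at hneg
    have h1 : Real.cosh u * Real.cosh e ≤ Real.cosh c2 := by
      nlinarith only [hc2eq, mul_nonneg (mul_pos hsu hse).le (neg_nonneg.2 hneg)]
    have h2 : Real.cosh u * C ≤ C + q^4 := by
      nlinarith only [h1, hCcoshe, hcoshc2, Real.cosh_pos u]
    have h3 : q^4 < C * (Real.cosh η - 1) := by
      nlinarith only [hq4q, hqm1, hm1p]
    have h5 : Real.cosh η < Real.cosh u := cosh_smono hη.le hcon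
    have h6 : C*Real.cosh η < C*Real.cosh u := by nlinarith only [h5, hC]
    linarith only [h2, h3, h6]
  -- v cannot be tiny
  have hvbig : 1 + q^2 < Real.cosh v := by
    by_contra hsmall
    push_neg at hsmall
    have hmA : γ (u/2) ∈ A := hAc γ 0 u hγ (by rw [hγ0]; exact hxA) (by rw [hγ1]; exact hyA)
      (u/2) ⟨by linarith only [hu0], by linarith only [hu0]⟩
    have hsepm : D ≤ dist (γ (u/2)) bb := hsep _ hmA bb hbbB
    have hM1m := M1 (u/2) ⟨by linarith only [hu0], by linarith only [hu0]⟩ e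
      ⟨by linarith only [he0], le_refl e⟩
    rw [hδ1] at hM1m
    have hCm : C ≤ Real.cosh (u/2) * Real.cosh e - Real.sinh (u/2) * Real.sinh e * X1 :=
      le_trans (cosh_mono hDpos.le hsepm) hM1m
    have hid : 2*Real.cosh (u/2)*(Real.cosh (u/2)*Real.cosh e - Real.sinh (u/2)*Real.sinh e*X1)
        = Real.cosh e + Real.cosh c2 := by
      rw [hc2eq, cosh_halfc u, sinh_halfd u]; ring
    have hMED : 2*C*Real.cosh (u/2) ≤ Real.cosh e + Real.cosh c2 := by
      nlinarith only [Real.cosh_pos (u/2), hCm, hid]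
    have hv0' : (0:ℝ) ≤ v := by rw [hv_def]; exact dist_nonneg
    have hsv0 : 0 ≤ Real.sinh v := Real.sinh_nonneg_iff.mpr hv0'
    have hsinhv : Real.sinh v ≤ 2*q := by
      have h1 : Real.sinh v ^ 2 ≤ (1+q^2)^2 - 1 := by
        rw [Real.sinh_sq]
        nlinarith only [Real.one_le_cosh v, hsmall]
      nlinarith only [h1, hq0, hsv0, hq4q2, mul_pos hq0 hq0]
    have hsc1 : Real.sinh c1 ≤ C + q^4 :=
      le_trans (Real.sinh_lt_cosh c1).le hcoshc1
    have hche : Real.cosh e ≤ Real.cosh (c1 + v) :=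
      cosh_mono (by linarith only [hDpos, heD]) htrie
    rw [Real.cosh_add] at hche
    have hCq0 : (0:ℝ) ≤ C + q^4 := by nlinarith only [hC, hq40]
    have t1 : Real.cosh c1 * Real.cosh v ≤ (C+q^4)*(1+q^2) :=
      mul_le_mul hcoshc1 hsmall (Real.cosh_pos v).le hCq0
    have t2 : Real.sinh c1 * Real.sinh v ≤ (C+q^4)*(2*q) :=
      mul_le_mul hsc1 hsinhv hsv0 hCq0
    have hfin : Real.cosh e + Real.cosh c2 ≤ (C+q^4)*(2 + q^2 + 2*q) := by
      nlinarith only [hche, t1, t2, hcoshc2]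
    have h5 : 2*C*Real.cosh (η/2) < (C+q^4)*(2+q^2+2*q) := by
      nlinarith only [hMED, hfin, hcu2, hC]
    have e5 : q^5 ≤ q^2 := by
      nlinarith only [mul_le_mul_of_nonneg_right hq4q hq0.le, hq2q]
    have e6 : q^6 ≤ q^2 := by
      nlinarith only [mul_le_mul_of_nonneg_right hq4q2 (sq_nonneg q), hq4q2]
    have h7 : (C+q^4)*(2+q^2+2*q) - 2*C ≤ (3*C+5)*q := by
      nlinarith only [hq2q, hq4q, hC, e5, e6, hq0, hq4q2]
    have h8 : q*(3*C+5) ≤ 2*C*Real.cosh (η/2) - 2*C :=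
      (le_div_iff₀ (by nlinarith only [hC] : (0:ℝ) < 3*C+5)).mp hqm2
    linarith only [h5, h7, h8]
  have hv0 : 0 < v := by
    have hvge : (0:ℝ) ≤ v := by rw [hv_def]; exact dist_nonneg
    rcases eq_or_lt_of_le hvge with h|h
    · exfalso
      rw [← h] at hvbig
      simp only [Real.cosh_zero] at hvbig
      linarith only [hvbig, pow_pos hq0 2]
    · exact h
  -- triangle T2 = (bb; x, bx)
  have hδ2 : IsGeodesicOn (fun t => δ (e - t)) 0 e := geo_reverse hδ
  have hδ20 : (fun t => δ (e - t)) 0 = bb := by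
    show δ (e - 0) = bb; rw [sub_zero]; exact hδ1
  have hδ2e : (fun t => δ (e - t)) e = x := by
    show δ (e - e) = x; rw [sub_self]; exact hδ0
  have M2 := master' hY he'd hv_def.symm hc1_def.symm hδ2 hδ20 hδ2e hβ hβ0 hβ1 he0 hv0
  set X2 := (Real.cosh e * Real.cosh v - Real.cosh c1) / (Real.sinh e * Real.sinh v) with hX2_def
  have hsv : 0 < Real.sinh v := Real.sinh_pos_iff.mpr hv0
  have hc1eq : Real.cosh c1 = Real.cosh e * Real.cosh v - Real.sinh e * Real.sinh v * X2 := by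
    rw [hX2_def]; field_simp; ring
  clear_value X2
  have hX2le : X2 ≤ 1 := by
    have h1 : Real.cosh (e - v) ≤ Real.cosh c1 := by
      rw [← Real.cosh_abs (e-v), ← Real.cosh_abs c1]
      apply Real.cosh_le_cosh.mpr
      rw [abs_abs, abs_of_nonneg (abs_nonneg _), abs_of_nonneg (hDpos.le.trans hc1D)]
      exact habs2
    rw [Real.cosh_sub] at h1
    nlinarith only [hc1eq, mul_pos hse hsv, h1]
  have hX2pos : 0 < X2 := by
    by_contra hneg
    push_neg at hneg
    have h1 : Real.cosh e * Real.cosh v ≤ Real.cosh c1 := by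
      nlinarith only [hc1eq, mul_nonneg (mul_pos hse hsv).le (neg_nonneg.2 hneg)]
    have hp : C*Real.cosh v ≤ Real.cosh e*Real.cosh v := by
      nlinarith only [hCcoshe, Real.cosh_pos v]
    have h6 : C*(1+q^2) < C*Real.cosh v := by nlinarith only [hvbig, hC]
    have h7 : 1*q^2 ≤ C*q^2 := mul_le_mul_of_nonneg_right (le_of_lt hC) (sq_nonneg q)
    linarith only [h1, hp, h6, h7, hcoshc1, hq4q2]
  -- the squeeze
  have hmA : γ (u/2) ∈ A := hAc γ 0 u hγ (by rw [hγ0]; exact hxA) (by rw [hγ1]; exact hyA)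
    (u/2) ⟨by linarith only [hu0], by linarith only [hu0]⟩
  have hnB : β (v/2) ∈ B := hBc β 0 v hβ (by rw [hβ0]; exact hbbB) (by rw [hβ1]; exact hbxB)
    (v/2) ⟨by linarith only [hv0], by linarith only [hv0]⟩
  set P1 := Real.cosh (u/2) * Real.cosh (e/2) - Real.sinh (u/2) * Real.sinh (e/2) * X1
    with hP1def
  set P2 := Real.cosh (e/2) * Real.cosh (v/2) - Real.sinh (e/2) * Real.sinh (v/2) * X2
    with hP2def
  have hd1 : Real.cosh (dist (γ (u/2)) (δ (e/2))) ≤ P1 :=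
    M1 (u/2) ⟨by linarith only [hu0], by linarith only [hu0]⟩ (e/2)
      ⟨by linarith only [he0], by linarith only [he0]⟩
  have hd2 : Real.cosh (dist (δ (e/2)) (β (v/2))) ≤ P2 := by
    have h := M2 (e/2) ⟨by linarith only [he0], by linarith only [he0]⟩ (v/2)
      ⟨by linarith only [hv0], by linarith only [hv0]⟩
    have h2 : Real.cosh (dist (δ (e - e/2)) (β (v/2))) ≤ P2 := h
    rwa [show e - e/2 = e/2 by ring] at h2
  clear_value P1 P2
  have hP1ge1 : 1 ≤ P1 := le_trans (Real.one_le_cosh _) hd1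
  have hP2ge1 : 1 ≤ P2 := le_trans (Real.one_le_cosh _) hd2
  have hsep_mn : D ≤ dist (γ (u/2)) (β (v/2)) := hsep _ hmA _ hnB
  have htri_mn : dist (γ (u/2)) (β (v/2))
      ≤ dist (γ (u/2)) (δ (e/2)) + dist (δ (e/2)) (β (v/2)) := dist_triangle _ _ _
  have hCs : C ≤ Real.cosh (dist (γ (u/2)) (δ (e/2)) + dist (δ (e/2)) (β (v/2))) :=
    cosh_mono hDpos.le (le_trans hsep_mn htri_mn)
  rw [Real.cosh_add] at hCs
  have hsh1 : Real.sinh (dist (γ (u/2)) (δ (e/2))) ≤ Real.sqrt (P1^2 - 1) := by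
    rw [sinh_eq_sqrt dist_nonneg]
    apply Real.sqrt_le_sqrt
    nlinarith only [hd1, Real.one_le_cosh (dist (γ (u/2)) (δ (e/2)))]
  have hsh2 : Real.sinh (dist (δ (e/2)) (β (v/2))) ≤ Real.sqrt (P2^2 - 1) := by
    rw [sinh_eq_sqrt dist_nonneg]
    apply Real.sqrt_le_sqrt
    nlinarith only [hd2, Real.one_le_cosh (dist (δ (e/2)) (β (v/2)))]
  have hCsq : C ≤ P1^2 + P2^2 - 1 := by
    have t1 : Real.cosh (dist (γ (u/2)) (δ (e/2))) * Real.cosh (dist (δ (e/2)) (β (v/2)))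
        ≤ P1 * P2 :=
      mul_le_mul hd1 hd2 (Real.cosh_pos _).le (by linarith only [hP1ge1])
    have t2 : Real.sinh (dist (γ (u/2)) (δ (e/2))) * Real.sinh (dist (δ (e/2)) (β (v/2)))
        ≤ Real.sqrt (P1^2-1) * Real.sqrt (P2^2-1) :=
      mul_le_mul hsh1 hsh2 (Real.sinh_nonneg_iff.mpr dist_nonneg) (Real.sqrt_nonneg _)
    have t3 : Real.sqrt (P1^2-1) * Real.sqrt (P2^2-1) ≤ ((P1^2-1) + (P2^2-1))/2 :=
      sqrt_amgm (by nlinarith only [hP1ge1]) (by nlinarith only [hP2ge1])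
    nlinarith only [hCs, t1, t2, t3, sq_nonneg (P1 - P2)]
  have hP1sq : 2*P1^2 - 1 = Real.cosh c2
      - 2*(Real.sinh (u/2)^2*Real.sinh (e/2)^2*(1-X1^2)) := by
    rw [hP1def]
    rw [Pid (Real.cosh (u/2)) (Real.sinh (u/2)) (Real.cosh (e/2)) (Real.sinh (e/2)) X1
      (Real.cosh_sq (u/2)) (Real.cosh_sq (e/2))]
    rw [hc2eq, cosh_halfc u, cosh_halfc e, sinh_halfd u, sinh_halfd e]; ring
  have hP2sq : 2*P2^2 - 1 = Real.cosh c1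
      - 2*(Real.sinh (e/2)^2*Real.sinh (v/2)^2*(1-X2^2)) := by
    rw [hP2def]
    rw [Pid (Real.cosh (e/2)) (Real.sinh (e/2)) (Real.cosh (v/2)) (Real.sinh (v/2)) X2
      (Real.cosh_sq (e/2)) (Real.cosh_sq (v/2))]
    rw [hc1eq, cosh_halfc e, cosh_halfc v, sinh_halfd e, sinh_halfd v]; ring
  have hW : Real.sinh (u/2)^2*Real.sinh (e/2)^2*(1-X1^2)
      + Real.sinh (e/2)^2*Real.sinh (v/2)^2*(1-X2^2) ≤ q^4 := by
    nlinarith only [hCsq, hP1sq, hP2sq, hcoshc1, hcoshc2]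
  have hX1sq : 0 ≤ 1 - X1^2 := by nlinarith only [hX1le, hX1pos]
  have hX2sq : 0 ≤ 1 - X2^2 := by nlinarith only [hX2le, hX2pos]
  have k1 : (0:ℝ) ≤ Real.sinh (u/2)^2*Real.sinh (e/2)^2 := by positivity
  have k2 : (0:ℝ) ≤ Real.sinh (e/2)^2*Real.sinh (v/2)^2 := by positivity
  have hW1 : Real.sinh (u/2)^2*Real.sinh (e/2)^2*(1-X1) ≤ q^4 := by
    nlinarith only [hW, mul_nonneg (mul_nonneg k1 (sub_nonneg.2 hX1le)) hX1pos.le,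
      mul_nonneg k2 hX2sq]
  have hW2 : Real.sinh (e/2)^2*Real.sinh (v/2)^2*(1-X2) ≤ q^4 := by
    nlinarith only [hW, mul_nonneg (mul_nonneg k2 (sub_nonneg.2 hX2le)) hX2pos.le,
      mul_nonneg k1 hX1sq]
  have hc8 : 32*q ≤ C - 1 := by linarith only [hqm3]
  -- u ≤ e
  have hue : u ≤ e := by
    by_contra hlt; push_neg at hlt
    have heu : e ∈ Set.Icc (0:ℝ) u := ⟨by linarith only [he0], hlt.le⟩
    have hM := M1 e heu e ⟨by linarith only [he0], le_refl e⟩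
    rw [hδ1] at hM
    have hmem : γ e ∈ A := hAc γ 0 u hγ (by rw [hγ0]; exact hxA) (by rw [hγ1]; exact hyA) e heu
    have hsepe : C ≤ Real.cosh (dist (γ e) bb) := cosh_mono hDpos.le (hsep _ hmem bb hbbB)
    have hkey : C ≤ 1 + Real.sinh e^2*(1-X1) := by
      nlinarith only [Real.cosh_sq e, le_trans hsepe hM]
    have hh : Real.sinh e^2 = 4*Real.sinh (e/2)^2*Real.cosh (e/2)^2 := by
      rw [sinh_halfd e]; ring
    have hce2 : Real.cosh (e/2)^2 ≤ Real.cosh (u/2)^2 := by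
      have h1 := cosh_mono (by linarith only [he0] : (0:ℝ) ≤ e/2)
        (by linarith only [hlt] : e/2 ≤ u/2)
      nlinarith only [h1, Real.cosh_pos (e/2)]
    have hbu2 : sη2 < Real.sinh (u/2)^2 := by
      have h1 : Real.sinh (η/2) < Real.sinh (u/2) := Real.sinh_lt_sinh.mpr (by linarith only [hcon])
      have h2 : 0 < Real.sinh (η/2) := Real.sinh_pos_iff.mpr (by linarith only [hη])
      rw [hsη2def]
      nlinarith only [h1, h2]
    have h1 : Real.sinh (u/2)^2*(C-1) ≤ Real.sinh (u/2)^2*(Real.sinh e^2*(1-X1)) := by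
      nlinarith only [sq_nonneg (Real.sinh (u/2)), hkey]
    have h2 : Real.sinh (u/2)^2*(Real.sinh e^2*(1-X1))
        = 4*Real.cosh (e/2)^2*(Real.sinh (u/2)^2*Real.sinh (e/2)^2*(1-X1)) := by
      rw [hh]; ring
    have h3 : 4*Real.cosh (e/2)^2*(Real.sinh (u/2)^2*Real.sinh (e/2)^2*(1-X1))
        ≤ 4*Real.cosh (e/2)^2*q^4 := by
      nlinarith only [hW1, sq_nonneg (Real.cosh (e/2))]
    have h4 : Real.cosh (u/2)^2 = 1 + Real.sinh (u/2)^2 := by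
      rw [Real.cosh_sq]; ring
    have h6 : Real.cosh (e/2)^2 ≤ 1 + Real.sinh (u/2)^2 := by linarith only [hce2, h4]
    have h5 : 4*Real.cosh (e/2)^2*q^4 ≤ 4*(1 + Real.sinh (u/2)^2)*q^4 := by
      nlinarith only [h6, hq40]
    have hstep : Real.sinh (u/2)^2*(C-1) ≤ 4*q^4*(1 + Real.sinh (u/2)^2) := by
      linarith only [h1, h2, h3, h5]
    have e0 : 4*q^4 ≤ (C-1)/2 := by linarith only [hq4q, hc8, hq0]
    have e1 : 4*q^4*Real.sinh (u/2)^2 ≤ (C-1)/2*Real.sinh (u/2)^2 := by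
      nlinarith only [e0, sq_nonneg (Real.sinh (u/2))]
    have e2 : (C-1)/2*Real.sinh (u/2)^2 ≤ 4*q^4 := by linarith only [hstep, e1]
    have e3 : sη2*(C-1)/2 < 4*q^4 := by
      nlinarith only [mul_pos (sub_pos.2 hbu2) (by linarith only [hC] : (0:ℝ) < C-1), e2]
    linarith only [e3, hqm4, hq4q, hq0]
  -- v ≤ e
  have hve : v ≤ e := by
    by_contra hlt; push_neg at hlt
    have hev : e ∈ Set.Icc (0:ℝ) v := ⟨by linarith only [he0], hlt.le⟩
    have hM := M2 e ⟨by linarith only [he0], le_refl e⟩ e hev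
    have hM' : Real.cosh (dist (δ (e - e)) (β e)) ≤ Real.cosh e * Real.cosh e
        - Real.sinh e * Real.sinh e * X2 := hM
    rw [sub_self, hδ0] at hM'
    have hmemB : β e ∈ B := hBc β 0 v hβ (by rw [hβ0]; exact hbbB) (by rw [hβ1]; exact hbxB) e hev
    have hsepe : C ≤ Real.cosh (dist x (β e)) := cosh_mono hDpos.le (hsep x hxA _ hmemB)
    have hkey : C ≤ 1 + Real.sinh e^2*(1-X2) := by
      nlinarith only [Real.cosh_sq e, le_trans hsepe hM']
    have hh : Real.sinh e^2 = 4*Real.sinh (e/2)^2*Real.cosh (e/2)^2 := by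
      rw [sinh_halfd e]; ring
    have hce2 : Real.cosh (e/2)^2 ≤ Real.cosh (v/2)^2 := by
      have h1 := cosh_mono (by linarith only [he0] : (0:ℝ) ≤ e/2)
        (by linarith only [hlt] : e/2 ≤ v/2)
      nlinarith only [h1, Real.cosh_pos (e/2)]
    have hbv2 : q^2/2 < Real.sinh (v/2)^2 := by
      linarith only [cosh_halfs v, hvbig]
    have h1 : Real.sinh (v/2)^2*(C-1) ≤ Real.sinh (v/2)^2*(Real.sinh e^2*(1-X2)) := by
      nlinarith only [sq_nonneg (Real.sinh (v/2)), hkey]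
    have h2 : Real.sinh (v/2)^2*(Real.sinh e^2*(1-X2))
        = 4*Real.cosh (e/2)^2*(Real.sinh (e/2)^2*Real.sinh (v/2)^2*(1-X2)) := by
      rw [hh]; ring
    have h3 : 4*Real.cosh (e/2)^2*(Real.sinh (e/2)^2*Real.sinh (v/2)^2*(1-X2))
        ≤ 4*Real.cosh (e/2)^2*q^4 := by
      nlinarith only [hW2, sq_nonneg (Real.cosh (e/2))]
    have h4 : Real.cosh (v/2)^2 = 1 + Real.sinh (v/2)^2 := by
      rw [Real.cosh_sq]; ring
    have h6 : Real.cosh (e/2)^2 ≤ 1 + Real.sinh (v/2)^2 := by linarith only [hce2, h4]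
    have h5 : 4*Real.cosh (e/2)^2*q^4 ≤ 4*(1 + Real.sinh (v/2)^2)*q^4 := by
      nlinarith only [h6, hq40]
    have hstep : Real.sinh (v/2)^2*(C-1) ≤ 4*q^4*(1 + Real.sinh (v/2)^2) := by
      linarith only [h1, h2, h3, h5]
    have e0 : 4*q^4 ≤ (C-1)/2 := by linarith only [hq4q, hc8, hq0]
    have e1 : 4*q^4*Real.sinh (v/2)^2 ≤ (C-1)/2*Real.sinh (v/2)^2 := by
      nlinarith only [e0, sq_nonneg (Real.sinh (v/2))]
    have e2 : (C-1)/2*Real.sinh (v/2)^2 ≤ 4*q^4 := by linarith only [hstep, e1]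
    have e3 : q^2/2*((C-1)/2) < 4*q^4 := by
      nlinarith only [mul_pos (sub_pos.2 hbv2) (by linarith only [hC] : (0:ℝ) < C-1), e2]
    have f1 : 8*(q*q^2) ≤ (C-1)*q^2/4 := by
      nlinarith only [hc8, sq_nonneg q]
    have f2 : q^4 ≤ q*q^2 := by
      nlinarith only [mul_le_mul_of_nonneg_right hq2q (sq_nonneg q)]
    linarith only [e3, f1, f2, mul_pos hq0 (pow_pos hq0 2)]
  -- the two almost-collinearity bounds
  set ΔA := 4*q^4 + 4*q^4/sD2 with hΔAdef
  have hΔA0 : 0 < ΔA := by rw [hΔAdef]; positivity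
  clear_value ΔA
  have hbe2 : sD2 ≤ Real.sinh (e/2)^2 := by
    have h1 : Real.sinh (D/2) ≤ Real.sinh (e/2) := Real.sinh_le_sinh.mpr (by linarith only [heD])
    have h2 : 0 ≤ Real.sinh (D/2) := Real.sinh_nonneg_iff.mpr (by linarith only [hDpos])
    rw [hsD2def]
    nlinarith only [h1, h2]
  have hρ1mem : u ∈ Set.Icc (0:ℝ) e := ⟨by linarith only [hu0], hue⟩
  have hρ1b := M1 u ⟨by linarith only [hu0], le_refl u⟩ u hρ1mem
  rw [hγ1] at hρ1b
  set ρ1 := dist y (δ u) with hρ1def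
  clear_value ρ1
  have hρ1 : Real.cosh ρ1 ≤ 1 + ΔA := by
    have hkey : Real.cosh ρ1 ≤ 1 + Real.sinh u^2*(1-X1) := by
      nlinarith only [Real.cosh_sq u, hρ1b]
    have hh : Real.sinh u^2 = 4*Real.sinh (u/2)^2*Real.cosh (u/2)^2 := by
      rw [sinh_halfd u]; ring
    have hcu2e : Real.cosh (u/2)^2 ≤ Real.cosh (e/2)^2 := by
      have h1 := cosh_mono (by linarith only [hu0] : (0:ℝ) ≤ u/2)
        (by linarith only [hue] : u/2 ≤ e/2)
      nlinarith only [h1, Real.cosh_pos (u/2)]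
    have h1 : Real.sinh (e/2)^2*(Real.cosh ρ1 - 1)
        ≤ Real.sinh (e/2)^2*(Real.sinh u^2*(1-X1)) := by
      nlinarith only [sq_nonneg (Real.sinh (e/2)), hkey]
    have h2 : Real.sinh (e/2)^2*(Real.sinh u^2*(1-X1))
        = 4*Real.cosh (u/2)^2*(Real.sinh (u/2)^2*Real.sinh (e/2)^2*(1-X1)) := by
      rw [hh]; ring
    have h3 : 4*Real.cosh (u/2)^2*(Real.sinh (u/2)^2*Real.sinh (e/2)^2*(1-X1))
        ≤ 4*Real.cosh (u/2)^2*q^4 := by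
      nlinarith only [hW1, sq_nonneg (Real.cosh (u/2))]
    have h4 : Real.cosh (e/2)^2 = 1 + Real.sinh (e/2)^2 := by
      rw [Real.cosh_sq]; ring
    have h6 : Real.cosh (u/2)^2 ≤ 1 + Real.sinh (e/2)^2 := by linarith only [hcu2e, h4]
    have h5' : 4*Real.cosh (u/2)^2*q^4 ≤ 4*(1 + Real.sinh (e/2)^2)*q^4 := by
      nlinarith only [h6, hq40]
    have hstep : Real.sinh (e/2)^2*(Real.cosh ρ1 - 1) ≤ 4*q^4*(1 + Real.sinh (e/2)^2) := by
      linarith only [h1, h2, h3, h5']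
    rcases le_or_gt (Real.cosh ρ1) (1+4*q^4) with h|h
    · have h6 : (0:ℝ) ≤ 4*q^4/sD2 := by positivity
      rw [hΔAdef]; linarith only [h, h6]
    · have h5 : sD2*(Real.cosh ρ1 - 1 - 4*q^4) ≤ 4*q^4 := by
        nlinarith only [hstep, hbe2, h]
      have hfs : ΔA*sD2 = 4*q^4*sD2 + 4*q^4 := by
        rw [hΔAdef]; field_simp
      nlinarith only [hsD2, h5, hfs]
  have hρ2b' := M2 v ⟨by linarith only [hv0], hve⟩ v ⟨by linarith only [hv0], le_refl v⟩
  have hρ2b : Real.cosh (dist (δ (e - v)) (β v)) ≤ Real.cosh v * Real.cosh v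
      - Real.sinh v * Real.sinh v * X2 := hρ2b'
  rw [hβ1] at hρ2b
  set ρ2 := dist (δ (e - v)) bx with hρ2def
  clear_value ρ2
  have hρ2 : Real.cosh ρ2 ≤ 1 + ΔA := by
    have hkey : Real.cosh ρ2 ≤ 1 + Real.sinh v^2*(1-X2) := by
      nlinarith only [Real.cosh_sq v, hρ2b]
    have hh : Real.sinh v^2 = 4*Real.sinh (v/2)^2*Real.cosh (v/2)^2 := by
      rw [sinh_halfd v]; ring
    have hcv2e : Real.cosh (v/2)^2 ≤ Real.cosh (e/2)^2 := by
      have h1 := cosh_mono (by linarith only [hv0] : (0:ℝ) ≤ v/2)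
        (by linarith only [hve] : v/2 ≤ e/2)
      nlinarith only [h1, Real.cosh_pos (v/2)]
    have h1 : Real.sinh (e/2)^2*(Real.cosh ρ2 - 1)
        ≤ Real.sinh (e/2)^2*(Real.sinh v^2*(1-X2)) := by
      nlinarith only [sq_nonneg (Real.sinh (e/2)), hkey]
    have h2 : Real.sinh (e/2)^2*(Real.sinh v^2*(1-X2))
        = 4*Real.cosh (v/2)^2*(Real.sinh (e/2)^2*Real.sinh (v/2)^2*(1-X2)) := by
      rw [hh]; ring
    have h3 : 4*Real.cosh (v/2)^2*(Real.sinh (e/2)^2*Real.sinh (v/2)^2*(1-X2))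
        ≤ 4*Real.cosh (v/2)^2*q^4 := by
      nlinarith only [hW2, sq_nonneg (Real.cosh (v/2))]
    have h4 : Real.cosh (e/2)^2 = 1 + Real.sinh (e/2)^2 := by
      rw [Real.cosh_sq]; ring
    have h6 : Real.cosh (v/2)^2 ≤ 1 + Real.sinh (e/2)^2 := by linarith only [hcv2e, h4]
    have h5' : 4*Real.cosh (v/2)^2*q^4 ≤ 4*(1 + Real.sinh (e/2)^2)*q^4 := by
      nlinarith only [h6, hq40]
    have hstep : Real.sinh (e/2)^2*(Real.cosh ρ2 - 1) ≤ 4*q^4*(1 + Real.sinh (e/2)^2) := by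
      linarith only [h1, h2, h3, h5']
    rcases le_or_gt (Real.cosh ρ2) (1+4*q^4) with h|h
    · have h6 : (0:ℝ) ≤ 4*q^4/sD2 := by positivity
      rw [hΔAdef]; linarith only [h, h6]
    · have h5 : sD2*(Real.cosh ρ2 - 1 - 4*q^4) ≤ 4*q^4 := by
        nlinarith only [hstep, hbe2, h]
      have hfs : ΔA*sD2 = 4*q^4*sD2 + 4*q^4 := by
        rw [hΔAdef]; field_simp
      nlinarith only [hsD2, h5, hfs]
  -- the geodesic [x, bb] stays close to γ up to parameter u
  have hδu : IsGeodesicOn δ 0 u := geo_restrict hδ (by linarith only [hu0]) hue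
  have hdxδu : dist x (δ u) = u := by
    have h1 := geo_dist hδ (show (0:ℝ) ∈ Set.Icc (0:ℝ) e from ⟨le_refl 0, by linarith only [he0]⟩)
      hρ1mem (by linarith only [hu0])
    rw [hδ0] at h1
    rw [h1]; ring
  have M3 := master' hY hu_def.symm hdxδu hρ1def.symm hγ hγ0 hγ1 hδu hδ0 rfl hu0 hu0
  have hclose : ∀ s ∈ Set.Icc (0:ℝ) u, Real.cosh (dist (γ s) (δ s)) ≤ Real.cosh ρ1 := by
    intro s hs
    have h := M3 s hs s hs
    have hssu : Real.sinh s^2 ≤ Real.sinh u^2 := by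
      have h1 : Real.sinh s ≤ Real.sinh u := Real.sinh_le_sinh.mpr hs.2
      have h2 : 0 ≤ Real.sinh s := Real.sinh_nonneg_iff.mpr hs.1
      nlinarith only [h1, h2]
    have h1ρ : 1 ≤ Real.cosh ρ1 := Real.one_le_cosh _
    have hsu2 : 0 < Real.sinh u * Real.sinh u := mul_pos hsu hsu
    have key : Real.cosh s*Real.cosh s - Real.cosh ρ1 ≤ Real.sinh s*Real.sinh s*
        ((Real.cosh u*Real.cosh u - Real.cosh ρ1)/(Real.sinh u*Real.sinh u)) := by
      rw [← mul_div_assoc, le_div_iff₀ hsu2]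
      nlinarith only [Real.cosh_sq s, Real.cosh_sq u,
        mul_nonneg (sub_nonneg.2 hssu) (sub_nonneg.2 h1ρ)]
    linarith only [h, key]
  -- final contradiction
  set w := e - v with hwdef
  clear_value w
  have hw0 : 0 ≤ w := by rw [hwdef]; linarith only [hve]
  have hwc1 : w ≤ c1 := le_trans (le_abs_self w) habs2
  have hwD1 : w < D + 2*ε := lt_of_le_of_lt hwc1 hbxd
  rcases le_or_gt w u with hcase | hcase
  · have hwmem : w ∈ Set.Icc (0:ℝ) u := ⟨hw0, hcase⟩
    have hmem : γ w ∈ A := hAc γ 0 u hγ (by rw [hγ0]; exact hxA) (by rw [hγ1]; exact hyA) w hwmem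
    have hsepw : D ≤ dist (γ w) bx := hsep _ hmem bx hbxB
    have htriw : dist (γ w) bx ≤ dist (γ w) (δ w) + ρ2 := by
      rw [hρ2def]
      exact dist_triangle _ _ _
    have hd1w : Real.cosh (dist (γ w) (δ w)) ≤ 1 + ΔA := le_trans (hclose w hwmem) hρ1
    have hcw : C ≤ Real.cosh (dist (γ w) (δ w) + ρ2) :=
      cosh_mono hDpos.le (le_trans hsepw htriw)
    rw [Real.cosh_add] at hcw
    have hρ2nn : (0:ℝ) ≤ ρ2 := by rw [hρ2def]; exact dist_nonneg
    have hsh1 : Real.sinh (dist (γ w) (δ w)) ≤ Real.sqrt ((1+ΔA)^2-1) := by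
      rw [sinh_eq_sqrt dist_nonneg]
      apply Real.sqrt_le_sqrt
      nlinarith only [hd1w, Real.one_le_cosh (dist (γ w) (δ w))]
    have hsh2 : Real.sinh ρ2 ≤ Real.sqrt ((1+ΔA)^2-1) := by
      rw [sinh_eq_sqrt hρ2nn]
      apply Real.sqrt_le_sqrt
      nlinarith only [hρ2, Real.one_le_cosh ρ2]
    have hsq : Real.sqrt ((1+ΔA)^2-1)*Real.sqrt ((1+ΔA)^2-1) = (1+ΔA)^2-1 :=
      Real.mul_self_sqrt (by nlinarith only [hΔA0])
    have hfin : C ≤ 2*(1+ΔA)^2 - 1 := by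
      have t1 : Real.cosh (dist (γ w) (δ w)) * Real.cosh ρ2 ≤ (1+ΔA)*(1+ΔA) :=
        mul_le_mul hd1w hρ2 (Real.cosh_pos _).le (by linarith only [hΔA0])
      have t2 : Real.sinh (dist (γ w) (δ w)) * Real.sinh ρ2
          ≤ Real.sqrt ((1+ΔA)^2-1)*Real.sqrt ((1+ΔA)^2-1) :=
        mul_le_mul hsh1 hsh2 (Real.sinh_nonneg_iff.mpr hρ2nn) (Real.sqrt_nonneg _)
      nlinarith only [hcw, t1, t2, hsq]
    have hq16 : (0:ℝ) < 16*(1+1/sD2) := by positivity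
    have hminpos : (0:ℝ) < min 1 ((C-1)/8) :=
      lt_min one_pos (by linarith only [hC])
    have hq8 : q*(16*(1+1/sD2)) ≤ min 1 ((C-1)/8) := (le_div_iff₀ hq16).mp hqm5
    have h10 : (0:ℝ) < 1+1/sD2 := by positivity
    have hΔAq : ΔA ≤ 4*q*(1+1/sD2) := by
      rw [hΔAdef]
      have h9 : 4*q^4 + 4*q^4/sD2 = 4*q^4*(1+1/sD2) := by
        field_simp
      rw [h9]
      nlinarith only [mul_nonneg (sub_nonneg.2 hq4q) h10.le]
    have hΔAsmall : ΔA ≤ min 1 ((C-1)/8) := by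
      linarith only [hΔAq, hq8, hminpos]
    have hm1' : ΔA ≤ 1 := le_trans hΔAsmall (min_le_left _ _)
    have hm2' : ΔA ≤ (C-1)/8 := le_trans hΔAsmall (min_le_right _ _)
    nlinarith only [hfin, hm1', hm2', hΔA0, hC, mul_nonneg hΔA0.le (sub_nonneg.2 hm1')]
  · have hwmem : w ∈ Set.Icc (0:ℝ) e := ⟨hw0, by rw [hwdef]; linarith only [hv0]⟩
    have hmid : dist (δ u) (δ w) = w - u := geo_dist hδ hρ1mem hwmem hcase.le
    have hsepy : D ≤ dist y bx := hsep y hyA bx hbxB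
    have htriy : dist y bx ≤ ρ1 + (w-u) + ρ2 := by
      calc dist y bx ≤ dist y (δ u) + dist (δ u) bx := dist_triangle _ _ _
        _ ≤ dist y (δ u) + (dist (δ u) (δ w) + dist (δ w) bx) := by
            linarith only [dist_triangle (δ u) (δ w) bx]
        _ = ρ1 + (w-u) + ρ2 := by
            rw [← hρ1def, hmid, hρ2def]; ring
    have hρbound : ∀ ρ : ℝ, 0 ≤ ρ → Real.cosh ρ ≤ 1 + ΔA → ρ ≤ κ*q^2 := by
      intro ρ hρ0 hρc
      have h1 : 2*Real.sinh (ρ/2)^2 ≤ ΔA := by linarith only [cosh_halfs ρ, hρc]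
      have h2 : ρ/2 ≤ Real.sinh (ρ/2) := Real.self_le_sinh_iff.mpr (by linarith only [hρ0])
      have h2b : 0 ≤ Real.sinh (ρ/2) + ρ/2 := by linarith only [h2, hρ0]
      have h3 : ρ^2/2 ≤ ΔA := by
        nlinarith only [h1, mul_nonneg (sub_nonneg.2 h2) h2b]
      have h4 : (κ*q^2)^2 = 2*ΔA := by
        rw [hΔAdef, mul_pow, hκsq]; field_simp; ring
      have h5 : 0 < ρ + κ*q^2 := by
        have := mul_pos hκpos (pow_pos hq0 2)
        linarith only [hρ0, this]
      nlinarith only [h3, h4, h5, hρ0]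
    have hρ1' : ρ1 ≤ κ*q^2 := hρbound ρ1 (by rw [hρ1def]; exact dist_nonneg) hρ1
    have hρ2' : ρ2 ≤ κ*q^2 := hρbound ρ2 (by rw [hρ2def]; exact dist_nonneg) hρ2
    have hfin : η < 2*(κ*q^2) + 2*ε := by
      linarith only [hsepy, htriy, hρ1', hρ2', hwD1, hcon]
    have h2' : (0:ℝ) < 8*(κ+1) := by positivity
    have h3 : q*(8*(κ+1)) ≤ η := (le_div_iff₀ h2').mp hqm6
    have h1 : κ*q ≤ η/8 := by linarith only [h3, hq0]
    have h2 : κ*q^2 ≤ κ*q := by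
      nlinarith only [mul_nonneg hκpos.le (sub_nonneg.2 hq2q)]
    linarith only [hfin, h1, h2, hεη, hη]

end S18
end

/-- In a Hadamard manifold of curvature at most `-1`
(formalized: a complete simply connected CAT(-1) space), for disjoint closed
convex `A, B` at distance `D > 0`, any sequence `x i ∈ A` with
`dist(x i, B) → D` is Cauchy; consequently the pair of nearest points realizing
`dist(A,B)` exists and is unique. -/
theorem statement18 {Y : Type*} [MetricSpace Y] [CompleteSpace Y] [SimplyConnectedSpace Y]
    (hY : CATMinusOne Y) (A B : Set Y) (hA : IsClosed A) (hB : IsClosed B)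
    (hAc : GConvex A) (hBc : GConvex B) (hdisj : Disjoint A B)
    (D : ℝ) (hD : D = setDist A B) (hDpos : 0 < D)
    (x : ℕ → Y) (hx : ∀ i, x i ∈ A)
    (hlim : Filter.Tendsto (fun i => Metric.infDist (x i) B) Filter.atTop (nhds D)) :
    CauchySeq x ∧ ∃! p : Y × Y, p.1 ∈ A ∧ p.2 ∈ B ∧ dist p.1 p.2 = D := by
  have hsep : ∀ a ∈ A, ∀ b ∈ B, D ≤ dist a b := by
    intro a ha b hb
    rw [hD]
    have hbdd : BddBelow ((fun p : Y × Y => dist p.1 p.2) '' A ×ˢ B) := by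
      refine ⟨0, ?_⟩
      rintro r ⟨p, _, rfl⟩
      exact dist_nonneg
    exact csInf_le hbdd ⟨(a, b), ⟨ha, hb⟩, rfl⟩
  have hBne : B.Nonempty := by
    rcases B.eq_empty_or_nonempty with h | h
    · exfalso
      rw [hD, h] at hDpos
      simp only [setDist, Set.prod_empty, Set.image_empty, Real.sInf_empty] at hDpos
      exact lt_irrefl 0 hDpos
    · exact h
  have hAne : A.Nonempty := ⟨x 0, hx 0⟩
  have hsep' : ∀ b ∈ B, ∀ a ∈ A, D ≤ dist b a := by
    intro b hb a ha
    rw [dist_comm]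
    exact hsep a ha b hb
  -- the sequence is Cauchy
  have hcauchy : CauchySeq x := by
    rw [Metric.cauchySeq_iff]
    intro εc hεc
    obtain ⟨ε1, hε1, hcore⟩ := S18.core hY A B hAc hBc hBne D hDpos hsep (εc/2) (half_pos hεc)
    have hev : ∀ᶠ i in Filter.atTop, Metric.infDist (x i) B ≤ D + ε1 :=
      (hlim.eventually_lt_const (by linarith)).mono fun i hi => hi.le
    obtain ⟨N, hN⟩ := Filter.eventually_atTop.mp hev
    exact ⟨N, fun m hm n hn =>
      lt_of_le_of_lt (hcore (x m) (hx m) (x n) (hx n) (hN m hm) (hN n hn)) (by linarith)⟩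
  obtain ⟨p1, hp1⟩ := cauchySeq_tendsto_of_complete hcauchy
  have hp1A : p1 ∈ A := hA.mem_of_tendsto hp1 (Filter.Eventually.of_forall hx)
  have hinf : Metric.infDist p1 B = D := by
    have h1 : Filter.Tendsto (fun i => Metric.infDist (x i) B) Filter.atTop
        (nhds (Metric.infDist p1 B)) :=
      ((Metric.continuous_infDist_pt B).continuousAt.tendsto).comp hp1
    exact tendsto_nhds_unique h1 hlim
  -- a minimizing sequence in B for p1
  have hbex : ∀ n : ℕ, ∃ bb, bb ∈ B ∧ dist p1 bb < D + 1/(n+1) := by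
    intro n
    have hpos : (0:ℝ) < 1/((n:ℝ)+1) := by positivity
    have h1 : Metric.infDist p1 B < D + 1/(n+1) := by rw [hinf]; linarith
    obtain ⟨bb, hbB, hbd⟩ := (Metric.infDist_lt_iff hBne).mp h1
    exact ⟨bb, hbB, hbd⟩
  choose b hbB hbd using hbex
  have hbcauchy : CauchySeq b := by
    rw [Metric.cauchySeq_iff]
    intro εc hεc
    obtain ⟨ε1, hε1, hcore⟩ := S18.core hY B A hBc hAc hAne D hDpos hsep' (εc/2) (half_pos hεc)
    obtain ⟨N, hN⟩ : ∃ N : ℕ, 1/((N:ℝ)+1) ≤ ε1 := by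
      obtain ⟨N, hN⟩ := exists_nat_gt (1/ε1)
      refine ⟨N, ?_⟩
      rw [div_le_iff₀ (by positivity)]
      rw [div_lt_iff₀ hε1] at hN
      nlinarith [hε1, hN]
    have hkey : ∀ m : ℕ, N ≤ m → Metric.infDist (b m) A ≤ D + ε1 := by
      intro m hm
      have h1 : Metric.infDist (b m) A ≤ dist (b m) p1 := Metric.infDist_le_dist_of_mem hp1A
      have h2 : dist (b m) p1 = dist p1 (b m) := dist_comm _ _
      have h4 : ((N:ℝ)+1) ≤ ((m:ℝ)+1) := by
        have : ((N:ℝ)) ≤ m := by exact_mod_cast hm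
        linarith
      have h3 : (1:ℝ)/((m:ℝ)+1) ≤ 1/((N:ℝ)+1) :=
        one_div_le_one_div_of_le (by positivity) h4
      have := hbd m
      linarith
    exact ⟨N, fun m hm n hn =>
      lt_of_le_of_lt (hcore (b m) (hbB m) (b n) (hbB n) (hkey m hm) (hkey n hn)) (by linarith)⟩
  obtain ⟨q1, hq1t⟩ := cauchySeq_tendsto_of_complete hbcauchy
  have hq1B : q1 ∈ B := hB.mem_of_tendsto hq1t (Filter.Eventually.of_forall hbB)
  have hdistq : dist p1 q1 = D := by
    have h1 : Filter.Tendsto (fun n => dist p1 (b n)) Filter.atTop (nhds (dist p1 q1)) :=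
      ((continuous_const.dist continuous_id).continuousAt.tendsto).comp hq1t
    have hup : Filter.Tendsto (fun n : ℕ => D + 1/((n:ℝ)+1)) Filter.atTop (nhds D) := by
      have h2 := tendsto_one_div_add_atTop_nhds_zero_nat (𝕜 := ℝ)
      have h3 := Filter.Tendsto.add (tendsto_const_nhds (x := D) (f := Filter.atTop (α := ℕ))) h2
      simpa using h3
    have h2 : Filter.Tendsto (fun n => dist p1 (b n)) Filter.atTop (nhds D) :=
      tendsto_of_tendsto_of_tendsto_of_le_of_le tendsto_const_nhds hup
        (fun n => hsep p1 hp1A (b n) (hbB n)) (fun n => (hbd n).le)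
    exact tendsto_nhds_unique h1 h2
  refine ⟨hcauchy, ⟨(p1, q1), ⟨hp1A, hq1B, hdistq⟩, ?_⟩⟩
  rintro ⟨p2, q2⟩ ⟨hp2A, hq2B, hd2⟩
  have hpp : p2 = p1 := by
    have hall : ∀ η, 0 < η → dist p2 p1 ≤ η := by
      intro η hη
      obtain ⟨ε1, hε1, hcore⟩ := S18.core hY A B hAc hBc hBne D hDpos hsep η hη
      refine hcore p2 hp2A p1 hp1A ?_ ?_
      · have h1 : Metric.infDist p2 B ≤ dist p2 q2 := Metric.infDist_le_dist_of_mem hq2B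
        rw [hd2] at h1
        linarith
      · rw [hinf]; linarith
    have h0 : dist p2 p1 ≤ 0 := by
      by_contra hpos
      push_neg at hpos
      have := hall (dist p2 p1 / 2) (half_pos hpos)
      linarith
    exact dist_le_zero.mp h0
  have hqq : q2 = q1 := by
    have hall : ∀ η, 0 < η → dist q2 q1 ≤ η := by
      intro η hη
      obtain ⟨ε1, hε1, hcore⟩ := S18.core hY B A hBc hAc hAne D hDpos hsep' η hη
      refine hcore q2 hq2B q1 hq1B ?_ ?_
      · have h1 : Metric.infDist q2 A ≤ dist q2 p2 := Metric.infDist_le_dist_of_mem hp2A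
        rw [dist_comm, hd2] at h1
        linarith
      · have h1 : Metric.infDist q1 A ≤ dist q1 p1 := Metric.infDist_le_dist_of_mem hp1A
        rw [dist_comm, hdistq] at h1
        linarith
    have h0 : dist q2 q1 ≤ 0 := by
      by_contra hpos
      push_neg at hpos
      have := hall (dist q2 q1 / 2) (half_pos hpos)
      linarith
    exact dist_le_zero.mp h0
  exact Prod.ext hpp hqq
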